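/- Let 0 ≤ γ2 ≤ γ1 ≤ π/2 with γ1 + γ2 ≤ π/2, and let x3 ∈ [-1,1]. Define u0 = cos γ1 cos γ2 + x3 sin γ1 sin γ2, u1 = x3² − (cos γ2 sin γ1 − x3 cos γ1 sin γ2)², u2 = (x3 cos γ1 cos γ2 + sin γ1 sin γ2) x3, u3 = sin²γ1 + x3² cos²γ1. Then u2 ≥ u1 and u2² − u1·u3 ≥ 0 and u0² − u1 ≥ 0. (With strict inequalities when 0 < γ1 < π/2 and |x3| < 1.) -/
import Mathlib


open Real

set_option maxHeartbeats 1000000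

private lemma stmt1_aux (γ1 γ2 x3 : ℝ)
    (h1 : 0 ≤ γ2) (h2 : γ2 ≤ γ1) (h3 : γ1 ≤ π/2) (h4 : γ1 + γ2 ≤ π/2)
    (hx : x3 ∈ Set.Icc (-1:ℝ) 1) :
    ((x3^2 - (Real.cos γ2 * Real.sin γ1 - x3 * Real.cos γ1 * Real.sin γ2)^2) ≤ ((x3 * Real.cos γ1 * Real.cos γ2 + Real.sin γ1 * Real.sin γ2) * x3) ∧
      0 ≤ ((x3 * Real.cos γ1 * Real.cos γ2 + Real.sin γ1 * Real.sin γ2) * x3)^2 - (x3^2 - (Real.cos γ2 * Real.sin γ1 - x3 * Real.cos γ1 * Real.sin γ2)^2) * ((Real.sin γ1)^2 + x3^2 * (Real.cos γ1)^2) ∧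
      0 ≤ (Real.cos γ1 * Real.cos γ2 + x3 * Real.sin γ1 * Real.sin γ2)^2 - (x3^2 - (Real.cos γ2 * Real.sin γ1 - x3 * Real.cos γ1 * Real.sin γ2)^2)) ∧
      (0 < γ1 → γ1 < π/2 → |x3| < 1 →
        (x3^2 - (Real.cos γ2 * Real.sin γ1 - x3 * Real.cos γ1 * Real.sin γ2)^2) < ((x3 * Real.cos γ1 * Real.cos γ2 + Real.sin γ1 * Real.sin γ2) * x3) ∧
        0 < ((x3 * Real.cos γ1 * Real.cos γ2 + Real.sin γ1 * Real.sin γ2) * x3)^2 - (x3^2 - (Real.cos γ2 * Real.sin γ1 - x3 * Real.cos γ1 * Real.sin γ2)^2) * ((Real.sin γ1)^2 + x3^2 * (Real.cos γ1)^2) ∧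
        0 < (Real.cos γ1 * Real.cos γ2 + x3 * Real.sin γ1 * Real.sin γ2)^2 - (x3^2 - (Real.cos γ2 * Real.sin γ1 - x3 * Real.cos γ1 * Real.sin γ2)^2)) := by
  obtain ⟨hx1, hx2⟩ := hx
  have h0 : (0:ℝ) ≤ γ1 := le_trans h1 h2
  have hpi : (0:ℝ) < π := Real.pi_pos
  have hp1 : Real.sin γ1 ^ 2 + Real.cos γ1 ^ 2 = 1 := Real.sin_sq_add_cos_sq γ1
  have hp2 : Real.sin γ2 ^ 2 + Real.cos γ2 ^ 2 = 1 := Real.sin_sq_add_cos_sq γ2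
  have hs1 : 0 ≤ Real.sin γ1 := Real.sin_nonneg_of_nonneg_of_le_pi h0 (by linarith)
  have hs2 : 0 ≤ Real.sin γ2 := Real.sin_nonneg_of_nonneg_of_le_pi h1 (by linarith)
  have hc1 : 0 ≤ Real.cos γ1 := Real.cos_nonneg_of_mem_Icc ⟨by linarith, h3⟩
  have hc2 : 0 ≤ Real.cos γ2 := Real.cos_nonneg_of_mem_Icc ⟨by linarith, by linarith⟩
  have hss : Real.sin γ2 ≤ Real.sin γ1 :=
    Real.sin_le_sin_of_le_of_le_pi_div_two (by linarith) h3 h2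
  have hcc : Real.cos γ1 ≤ Real.cos γ2 :=
    Real.cos_le_cos_of_nonneg_of_le_pi h1 (by linarith) h2
  have hca : 0 ≤ Real.cos γ1 * Real.cos γ2 - Real.sin γ1 * Real.sin γ2 := by
    have := Real.cos_nonneg_of_mem_Icc (x := γ1 + γ2) ⟨by linarith, h4⟩
    rwa [Real.cos_add] at this
  have hcb : Real.cos γ1 * Real.cos γ2 + Real.sin γ1 * Real.sin γ2 ≤ 1 := by
    have := Real.cos_le_one (γ1 - γ2)
    rwa [Real.cos_sub] at this
  have hc1le : Real.cos γ1 ≤ 1 := Real.cos_le_one γ1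
  -- the three key algebraic identities
  have e1 : ((x3 * Real.cos γ1 * Real.cos γ2 + Real.sin γ1 * Real.sin γ2) * x3) - (x3^2 - (Real.cos γ2 * Real.sin γ1 - x3 * Real.cos γ1 * Real.sin γ2)^2) =
      (1 + x3)/2 * ((Real.cos γ1 * Real.cos γ2 + Real.sin γ1 * Real.sin γ2) *
        (1 - (Real.cos γ1 * Real.cos γ2 + Real.sin γ1 * Real.sin γ2)))
      + (1 - x3)/2 * ((Real.cos γ1 * Real.cos γ2 - Real.sin γ1 * Real.sin γ2) *
        (1 - (Real.cos γ1 * Real.cos γ2 - Real.sin γ1 * Real.sin γ2)))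
      + (1 - x3^2) * (1 - Real.cos γ1 * Real.cos γ2 - Real.cos γ1 ^ 2 * Real.sin γ2 ^ 2) := by
    linear_combination (Real.cos γ2 ^ 2 + Real.sin γ2 ^ 2) * hp1 + hp2
  have e2 : ((x3 * Real.cos γ1 * Real.cos γ2 + Real.sin γ1 * Real.sin γ2) * x3) ^ 2 - (x3^2 - (Real.cos γ2 * Real.sin γ1 - x3 * Real.cos γ1 * Real.sin γ2)^2) * ((Real.sin γ1)^2 + x3^2 * (Real.cos γ1)^2) =
      Real.sin γ1 ^ 2 * (1 - x3^2) *
        (Real.sin γ1 * Real.cos γ2 - Real.cos γ1 * Real.sin γ2 * x3) ^ 2 := by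
    linear_combination
      (-x3^4 + Real.cos γ2 ^ 2 * x3^4 + Real.sin γ2 ^ 2 * x3^4
        + Real.cos γ1 ^ 2 * Real.sin γ2 ^ 2 * x3^4
        - 2 * Real.sin γ1 * Real.cos γ1 * Real.sin γ2 * Real.cos γ2 * x3^3
        + Real.sin γ1 ^ 2 * Real.cos γ2 ^ 2 * x3^2) * hp1
      + (x3^4 + Real.sin γ1 ^ 2 * x3^2 - Real.sin γ1 ^ 2 * x3^4) * hp2
  have e3 : (Real.cos γ1 * Real.cos γ2 + x3 * Real.sin γ1 * Real.sin γ2) ^ 2 - (x3^2 - (Real.cos γ2 * Real.sin γ1 - x3 * Real.cos γ1 * Real.sin γ2)^2) = (1 - x3^2) * Real.cos γ2 ^ 2 := by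
    linear_combination (Real.cos γ2 ^ 2 + Real.sin γ2 ^ 2 * x3^2) * hp1 + x3^2 * hp2
  have hA : 0 ≤ 1 - Real.cos γ1 * Real.cos γ2 - Real.cos γ1 ^ 2 * Real.sin γ2 ^ 2 := by
    nlinarith only [hp2, mul_nonneg hc2 (sub_nonneg.2 hcc),
      mul_nonneg (mul_nonneg hs2 hs2)
        (by nlinarith only [hc1le, hc1] : (0:ℝ) ≤ 1 - Real.cos γ1 ^ 2)]
  have hcbnn : 0 ≤ Real.cos γ1 * Real.cos γ2 + Real.sin γ1 * Real.sin γ2 :=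
    add_nonneg (mul_nonneg hc1 hc2) (mul_nonneg hs1 hs2)
  have hca1 : Real.cos γ1 * Real.cos γ2 - Real.sin γ1 * Real.sin γ2 ≤ 1 := by
    nlinarith only [mul_nonneg hs1 hs2, hcb]
  have t1 : 0 ≤ (1 + x3)/2 * ((Real.cos γ1 * Real.cos γ2 + Real.sin γ1 * Real.sin γ2) *
      (1 - (Real.cos γ1 * Real.cos γ2 + Real.sin γ1 * Real.sin γ2))) :=
    mul_nonneg (by linarith only [hx1]) (mul_nonneg hcbnn (by linarith only [hcb]))
  have t2 : 0 ≤ (1 - x3)/2 * ((Real.cos γ1 * Real.cos γ2 - Real.sin γ1 * Real.sin γ2) *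
      (1 - (Real.cos γ1 * Real.cos γ2 - Real.sin γ1 * Real.sin γ2))) :=
    mul_nonneg (by linarith only [hx2]) (mul_nonneg hca (by linarith only [hca1]))
  have hx2nn : 0 ≤ 1 - x3^2 := by nlinarith only [hx1, hx2]
  have t3 : 0 ≤ (1 - x3^2) * (1 - Real.cos γ1 * Real.cos γ2 - Real.cos γ1 ^ 2 * Real.sin γ2 ^ 2) :=
    mul_nonneg hx2nn hA
  constructor
  · refine ⟨by linarith only [e1, t1, t2, t3], ?_, ?_⟩
    · rw [e2]; positivity
    · rw [e3]; positivity
  · intro hg1 hg2 hxs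
    rw [abs_lt] at hxs
    obtain ⟨hy1, hy2⟩ := hxs
    have hs1p : 0 < Real.sin γ1 := Real.sin_pos_of_pos_of_lt_pi hg1
      (by linarith only [hg2, hpi])
    have hc2p : 0 < Real.cos γ2 := Real.cos_pos_of_mem_Ioo
      ⟨by linarith only [h1, hpi], by linarith only [h1, h2, hg2]⟩
    have hc1lt : Real.cos γ1 < 1 := by nlinarith only [hs1p, hp1, hc1]
    have hx2p : 0 < 1 - x3^2 := by nlinarith only [hy1, hy2]
    have hkey : 0 < Real.sin γ1 * Real.cos γ2 - Real.cos γ1 * Real.sin γ2 * x3 := by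
      have h5 : Real.cos γ1 * Real.sin γ2 ≤ Real.cos γ2 * Real.sin γ1 :=
        mul_le_mul hcc hss hs2 hc2p.le
      nlinarith only [h5, hy1, hy2, mul_nonneg hc1 hs2, mul_pos hs1p hc2p]
    have hAp : 0 < 1 - Real.cos γ1 * Real.cos γ2 - Real.cos γ1 ^ 2 * Real.sin γ2 ^ 2 := by
      rcases eq_or_lt_of_le hs2 with h|h
      · nlinarith only [h.symm, hp2, hc1lt, hc1, hc2,
          mul_le_mul_of_nonneg_left (Real.cos_le_one γ2) hc1]
      · nlinarith only [mul_pos (mul_pos h h)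
            (by nlinarith only [hc1lt, hc1] : (0:ℝ) < 1 - Real.cos γ1 ^ 2),
          mul_nonneg hc2 (sub_nonneg.2 hcc), hp2]
    have t3p : 0 < (1 - x3^2) * (1 - Real.cos γ1 * Real.cos γ2 - Real.cos γ1 ^ 2 * Real.sin γ2 ^ 2) :=
      mul_pos hx2p hAp
    refine ⟨by linarith only [e1, t1, t2, t3p], ?_, ?_⟩
    · rw [e2]; positivity
    · rw [e3]; positivity

theorem stmt1 (γ1 γ2 x3 : ℝ)
    (h1 : 0 ≤ γ2) (h2 : γ2 ≤ γ1) (h3 : γ1 ≤ π/2) (h4 : γ1 + γ2 ≤ π/2)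
    (hx : x3 ∈ Set.Icc (-1:ℝ) 1) :
    let u0 := Real.cos γ1 * Real.cos γ2 + x3 * Real.sin γ1 * Real.sin γ2
    let u1 := x3^2 - (Real.cos γ2 * Real.sin γ1 - x3 * Real.cos γ1 * Real.sin γ2)^2
    let u2 := (x3 * Real.cos γ1 * Real.cos γ2 + Real.sin γ1 * Real.sin γ2) * x3
    let u3 := (Real.sin γ1)^2 + x3^2 * (Real.cos γ1)^2
    (u1 ≤ u2 ∧ 0 ≤ u2^2 - u1 * u3 ∧ 0 ≤ u0^2 - u1) ∧
      (0 < γ1 → γ1 < π/2 → |x3| < 1 →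
        u1 < u2 ∧ 0 < u2^2 - u1 * u3 ∧ 0 < u0^2 - u1) := by
  intro u0 u1 u2 u3
  exact stmt1_aux γ1 γ2 x3 h1 h2 h3 h4 hx
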